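/- (Theorem 2) On the VB-mesh, the condition number κ(A_N) := ‖A_N⁻¹‖ ‖A_N‖ of the upwind matrix satisfies κ(A_N) ≤ C N²/ε, where C depends only on a, q, β, max|b| and max|c|, but not on ε or N. -/

import Mathlib

/-- `ψ(t) = aεt/(q−t)`, the Bakhvalov mesh-generating function on the fine part. -/
noncomputable def psi (a ε q t : ℝ) : ℝ := a * ε * t / (q - t)

/-- `ψ′(t) = aεq/(q−t)²`. -/
noncomputable def psi' (a ε q t : ℝ) : ℝ := a * ε * q / (q - t) ^ 2

/-- The transition parameter `α = (q − √(aεq(1−q+aε)))/(1+aε)` of the VB-mesh. -/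
noncomputable def alph (a ε q : ℝ) : ℝ :=
  (q - Real.sqrt (a * ε * q * (1 - q + a * ε))) / (1 + a * ε)

/-- The mesh-generating function `λ`: `ψ` on `[0,α]`, its tangent line on `[α,1]`. -/
noncomputable def lam (a ε q t : ℝ) : ℝ :=
  if t ≤ alph a ε q then psi a ε q t
  else psi a ε q (alph a ε q) + psi' a ε q (alph a ε q) * (t - alph a ε q)

/-- VB-mesh points `x_i = λ(i/N)`. -/
noncomputable def meshx (a ε q : ℝ) (N i : ℕ) : ℝ := lam a ε q ((i : ℝ) / (N : ℝ))

/-- Mesh steps `h_i = x_i − x_{i−1}`. -/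
noncomputable def meshh (a ε q : ℝ) (N i : ℕ) : ℝ :=
  meshx a ε q N i - meshx a ε q N (i - 1)

/-- Averaged mesh steps `h̄_i = (h_i + h_{i+1})/2`. -/
noncomputable def meshhb (a ε q : ℝ) (N i : ℕ) : ℝ :=
  (meshh a ε q N i + meshh a ε q N (i + 1)) / 2

/-- The coarse (uniform) step `H = ψ′(α)/N` of the VB-mesh. -/
noncomputable def bigH (a ε q : ℝ) (N : ℕ) : ℝ := psi' a ε q (alph a ε q) / N
/-- Maximum absolute row sum norm of a matrix. -/
noncomputable def matNorm {n : ℕ} (A : Matrix (Fin n) (Fin n) ℝ) : ℝ :=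
  ⨆ i, ∑ j, |A i j|

/-- Maximum norm of a vector. -/
noncomputable def vecNorm {n : ℕ} (v : Fin n → ℝ) : ℝ := ⨆ i, |v i|

/-- The upwind finite-difference matrix `A_N` on the mesh `x` for
`-ε u'' - b u' + c u`, with Dirichlet rows `0` and `N`. -/
noncomputable def upwind (b c : ℝ → ℝ) (ε : ℝ) (N : ℕ) (x : ℕ → ℝ) :
    Matrix (Fin (N + 1)) (Fin (N + 1)) ℝ :=
  fun i j =>
    let h : ℕ → ℝ := fun k => x k - x (k - 1)
    let hb : ℕ → ℝ := fun k => (h k + h (k + 1)) / 2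
    if (i : ℕ) = 0 ∨ (i : ℕ) = N then (if j = i then 1 else 0)
    else if (j : ℕ) + 1 = (i : ℕ) then -ε / (h (i : ℕ) * hb (i : ℕ))
    else if (j : ℕ) = (i : ℕ) + 1 then
      -ε / (h ((i : ℕ) + 1) * hb (i : ℕ)) - b (x (i : ℕ)) / h ((i : ℕ) + 1)
    else if j = i then
      ε / (h (i : ℕ) * hb (i : ℕ)) +
        (ε / (h ((i : ℕ) + 1) * hb (i : ℕ)) + b (x (i : ℕ)) / h ((i : ℕ) + 1)) +
        c (x (i : ℕ))
    else 0

lemma sqrt_arg_lemma {a ε q : ℝ} (hq0 : 0 < q) (hq1 : q < 1) (hε : 0 < ε) (ha : 0 < a)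
    (haq : a * ε < q) :
    0 ≤ a * ε * q * (1 - q + a * ε) ∧ Real.sqrt (a * ε * q * (1 - q + a * ε)) < q := by
  have hu : 0 < a * ε := by positivity
  have hgt : (0:ℝ) < 1 - q + a * ε := by linarith
  refine ⟨by positivity, ?_⟩
  rw [Real.sqrt_lt' hq0]
  have h1 : a * ε * (1 - q + a * ε) < a * ε := by nlinarith
  have h2 : a * ε * q * (1 - q + a * ε) < q * (a * ε) := by nlinarith
  nlinarith

lemma alph_pos {a ε q : ℝ} (hq0 : 0 < q) (hq1 : q < 1) (hε : 0 < ε) (ha : 0 < a)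
    (haq : a * ε < q) : 0 < alph a ε q := by
  have hs := (sqrt_arg_lemma hq0 hq1 hε ha haq).2
  have : (0:ℝ) < 1 + a * ε := by positivity
  exact div_pos (by linarith) this

lemma alph_lt_q {a ε q : ℝ} (hq0 : 0 < q) (hq1 : q < 1) (hε : 0 < ε) (ha : 0 < a)
    (haq : a * ε < q) : alph a ε q < q := by
  have hu : 0 < a * ε := by positivity
  have hs : 0 ≤ Real.sqrt (a * ε * q * (1 - q + a * ε)) := Real.sqrt_nonneg _
  have h1 : (0:ℝ) < 1 + a * ε := by positivity
  rw [alph, div_lt_iff₀ h1]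
  nlinarith

/-- The quadratic identity satisfied by α: (1+aε)α² − 2qα + q² − aεq = 0. -/
lemma alph_quadratic {a ε q : ℝ} (hq0 : 0 < q) (hq1 : q < 1) (hε : 0 < ε) (ha : 0 < a)
    (haq : a * ε < q) :
    (1 + a * ε) * (alph a ε q) ^ 2 - 2 * q * alph a ε q + q ^ 2 - a * ε * q = 0 := by
  have harg := (sqrt_arg_lemma hq0 hq1 hε ha haq).1
  have hs2 : Real.sqrt (a * ε * q * (1 - q + a * ε)) ^ 2 = a * ε * q * (1 - q + a * ε) :=
    Real.sq_sqrt harg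
  have h1 : (0:ℝ) < 1 + a * ε := by positivity
  rw [alph]
  generalize Real.sqrt (a * ε * q * (1 - q + a * ε)) = s at hs2
  have h1ne : (1 + a * ε) ≠ 0 := ne_of_gt h1
  field_simp
  nlinarith [hs2]

lemma lam_one {a ε q : ℝ} (hq0 : 0 < q) (hq1 : q < 1) (hε : 0 < ε) (ha : 0 < a)
    (haq : a * ε < q) : lam a ε q 1 = 1 := by
  have hal := alph_lt_q hq0 hq1 hε ha haq
  have hd : 0 < q - alph a ε q := by linarith
  have hquad := alph_quadratic hq0 hq1 hε ha haq
  rw [lam, if_neg (by linarith)]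
  rw [psi, psi']
  field_simp
  nlinarith [hquad, sq_nonneg (q - alph a ε q)]

lemma psi_diff {a ε q t1 t2 : ℝ} (hq0 : 0 < q) (hε : 0 < ε) (ha : 0 < a)
    (h0 : 0 ≤ t1) (h12 : t1 ≤ t2) (h2q : t2 < q) :
    a * ε / q * (t2 - t1) ≤ psi a ε q t2 - psi a ε q t1 := by
  have hd1 : 0 < q - t1 := by linarith
  have hd2 : 0 < q - t2 := by linarith
  have hident : psi a ε q t2 - psi a ε q t1
      = a * ε * q * (t2 - t1) / ((q - t1) * (q - t2)) := by
    rw [psi, psi]; field_simp; ring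
  rw [hident, div_mul_eq_mul_div, div_le_div_iff₀ hq0 (by positivity)]
  have h1 : (q - t1) * (q - t2) ≤ q * q := by nlinarith
  have h2 : 0 ≤ a * ε * (t2 - t1) := by
    have := sub_nonneg.2 h12; positivity
  nlinarith [mul_le_mul_of_nonneg_left h1 h2]

lemma psi'_alph_ge {a ε q : ℝ} (hq0 : 0 < q) (hq1 : q < 1) (hε : 0 < ε) (ha : 0 < a)
    (haq : a * ε < q) : a * ε / q ≤ psi' a ε q (alph a ε q) := by
  have h1 := alph_pos hq0 hq1 hε ha haq
  have h2 := alph_lt_q hq0 hq1 hε ha haq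
  have hd : 0 < q - alph a ε q := by linarith
  rw [psi', div_le_div_iff₀ hq0 (by positivity)]
  have hsq : (q - alph a ε q) ^ 2 ≤ q * q := by nlinarith
  have h2 : (0:ℝ) ≤ a * ε := by positivity
  nlinarith [mul_le_mul_of_nonneg_left hsq h2]

lemma lam_diff {a ε q t1 t2 : ℝ} (hq0 : 0 < q) (hq1 : q < 1) (hε : 0 < ε) (ha : 0 < a)
    (haq : a * ε < q) (h0 : 0 ≤ t1) (h12 : t1 ≤ t2) :
    a * ε / q * (t2 - t1) ≤ lam a ε q t2 - lam a ε q t1 := by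
  have hap := alph_pos hq0 hq1 hε ha haq
  have haq' := alph_lt_q hq0 hq1 hε ha haq
  have hψ' := psi'_alph_ge hq0 hq1 hε ha haq
  by_cases hc2 : t2 ≤ alph a ε q
  · rw [lam, lam, if_pos hc2, if_pos (le_trans h12 hc2)]
    exact psi_diff hq0 hε ha h0 h12 (by linarith)
  · by_cases hc1 : t1 ≤ alph a ε q
    · rw [lam, lam, if_neg hc2, if_pos hc1]
      have hA : a * ε / q * (alph a ε q - t1) ≤ psi a ε q (alph a ε q) - psi a ε q t1 :=
        psi_diff hq0 hε ha h0 hc1 (by linarith)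
      have hB : a * ε / q * (t2 - alph a ε q) ≤ psi' a ε q (alph a ε q) * (t2 - alph a ε q) := by
        apply mul_le_mul_of_nonneg_right hψ'
        push_neg at hc2; linarith
      nlinarith
    · rw [lam, lam, if_neg hc2, if_neg hc1]
      have hB : a * ε / q * (t2 - t1) ≤ psi' a ε q (alph a ε q) * (t2 - t1) :=
        mul_le_mul_of_nonneg_right hψ' (by linarith)
      nlinarith

lemma lam_zero (a ε q : ℝ) (hq0 : 0 < q) (hq1 : q < 1) (hε : 0 < ε) (ha : 0 < a)
    (haq : a * ε < q) : lam a ε q 0 = 0 := by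
  rw [lam, if_pos (le_of_lt (alph_pos hq0 hq1 hε ha haq)), psi]
  simp

lemma lam_mem {a ε q t : ℝ} (hq0 : 0 < q) (hq1 : q < 1) (hε : 0 < ε) (ha : 0 < a)
    (haq : a * ε < q) (h0 : 0 ≤ t) (h1 : t ≤ 1) : 0 ≤ lam a ε q t ∧ lam a ε q t ≤ 1 := by
  have e0 := lam_zero a ε q hq0 hq1 hε ha haq
  have e1 := lam_one hq0 hq1 hε ha haq
  have d1 := lam_diff hq0 hq1 hε ha haq (le_refl 0) h0
  have d2 := lam_diff hq0 hq1 hε ha haq h0 h1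
  have hpos : 0 ≤ a * ε / q := by positivity
  constructor
  · nlinarith [mul_nonneg hpos (sub_nonneg.2 h0)]
  · nlinarith [mul_nonneg hpos (sub_nonneg.2 h1)]

/-- step and averaged step, as plain functions. -/
noncomputable def hst (x : ℕ → ℝ) (k : ℕ) : ℝ := x k - x (k - 1)
noncomputable def hbr (x : ℕ → ℝ) (k : ℕ) : ℝ := (hst x k + hst x (k + 1)) / 2

section triple
variable {b c : ℝ → ℝ} {ε : ℝ} {N : ℕ} {x : ℕ → ℝ}

lemma sum_triple {N : ℕ} (i : Fin (N + 1)) (h1 : 1 ≤ (i : ℕ)) (h2 : (i : ℕ) ≤ N - 1)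
    (hN : 2 ≤ N) (f : Fin (N + 1) → ℝ)
    (hf : ∀ j : Fin (N + 1), ¬((j : ℕ) + 1 = (i : ℕ)) → ¬((j : ℕ) = (i : ℕ) + 1) →
      j ≠ i → f j = 0) :
    ∑ j, f j = f ⟨(i : ℕ) - 1, by omega⟩ + f i + f ⟨(i : ℕ) + 1, by omega⟩ := by
  set jm : Fin (N + 1) := ⟨(i : ℕ) - 1, by omega⟩ with hjm
  set jp : Fin (N + 1) := ⟨(i : ℕ) + 1, by omega⟩ with hjp
  have hmi : jm ≠ i := by
    simp only [hjm, Ne, Fin.ext_iff]; omega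
  have hmp : jm ≠ jp := by
    simp only [hjm, hjp, Ne, Fin.ext_iff]; omega
  have hip : i ≠ jp := by
    simp only [hjp, Ne, Fin.ext_iff]; omega
  have hsub : ∑ j, f j = ∑ j ∈ ({jm, i, jp} : Finset (Fin (N + 1))), f j := by
    refine (Finset.sum_subset (Finset.subset_univ _) ?_).symm
    intro j _ hj
    simp only [Finset.mem_insert, Finset.mem_singleton, not_or] at hj
    obtain ⟨hj1, hj2, hj3⟩ := hj
    refine hf j ?_ ?_ hj2
    · intro hc; exact hj1 (by simp only [hjm, Fin.ext_iff]; omega)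
    · intro hc; exact hj3 (by simp only [hjp, Fin.ext_iff]; omega)
  rw [hsub]
  rw [Finset.sum_insert (by simp [hmi, hmp]), Finset.sum_insert (by simp [hip]),
    Finset.sum_singleton]
  ring

lemma upwind_entry_m (i : Fin (N + 1)) (h1 : 1 ≤ (i : ℕ)) (h2 : (i : ℕ) ≤ N - 1) (hN : 2 ≤ N) :
    upwind b c ε N x i ⟨(i : ℕ) - 1, by omega⟩
      = -ε / (hst x (i : ℕ) * hbr x (i : ℕ)) := by
  simp only [upwind, hst, hbr]
  rw [if_neg (by omega), if_pos (by omega)]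

lemma upwind_entry_p (i : Fin (N + 1)) (h1 : 1 ≤ (i : ℕ)) (h2 : (i : ℕ) ≤ N - 1) (hN : 2 ≤ N) :
    upwind b c ε N x i ⟨(i : ℕ) + 1, by omega⟩
      = -ε / (hst x ((i : ℕ) + 1) * hbr x (i : ℕ)) - b (x (i : ℕ)) / hst x ((i : ℕ) + 1) := by
  simp only [upwind, hst, hbr]
  rw [if_neg (by omega), if_neg (by omega)]
  simp

lemma upwind_entry_d (i : Fin (N + 1)) (h1 : 1 ≤ (i : ℕ)) (h2 : (i : ℕ) ≤ N - 1) (hN : 2 ≤ N) :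
    upwind b c ε N x i i
      = ε / (hst x (i : ℕ) * hbr x (i : ℕ))
        + (ε / (hst x ((i : ℕ) + 1) * hbr x (i : ℕ)) + b (x (i : ℕ)) / hst x ((i : ℕ) + 1))
        + c (x (i : ℕ)) := by
  simp only [upwind, hst, hbr]
  rw [if_neg (by omega), if_neg (by omega), if_neg (by omega)]
  simp

lemma upwind_entry_zero (i j : Fin (N + 1)) (h1 : 1 ≤ (i : ℕ)) (h2 : (i : ℕ) ≤ N - 1)
    (hN : 2 ≤ N) (hj1 : ¬((j : ℕ) + 1 = (i : ℕ))) (hj2 : ¬((j : ℕ) = (i : ℕ) + 1))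
    (hj3 : j ≠ i) : upwind b c ε N x i j = 0 := by
  simp only [upwind]
  rw [if_neg (by omega), if_neg hj1, if_neg hj2, if_neg hj3]

lemma upwind_mulVec_bdry (i : Fin (N + 1)) (hi : (i : ℕ) = 0 ∨ (i : ℕ) = N)
    (g : Fin (N + 1) → ℝ) : (upwind b c ε N x).mulVec g i = g i := by
  simp only [Matrix.mulVec, dotProduct, upwind, if_pos hi, ite_mul, one_mul,
    zero_mul]
  simp

lemma upwind_mulVec_interior (i : Fin (N + 1)) (h1 : 1 ≤ (i : ℕ)) (h2 : (i : ℕ) ≤ N - 1)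
    (hN : 2 ≤ N) (g : Fin (N + 1) → ℝ) :
    (upwind b c ε N x).mulVec g i
      = (-ε / (hst x (i : ℕ) * hbr x (i : ℕ))) * g ⟨(i : ℕ) - 1, by omega⟩
        + (ε / (hst x (i : ℕ) * hbr x (i : ℕ))
            + (ε / (hst x ((i : ℕ) + 1) * hbr x (i : ℕ))
              + b (x (i : ℕ)) / hst x ((i : ℕ) + 1)) + c (x (i : ℕ))) * g i
        + (-ε / (hst x ((i : ℕ) + 1) * hbr x (i : ℕ))
            - b (x (i : ℕ)) / hst x ((i : ℕ) + 1)) * g ⟨(i : ℕ) + 1, by omega⟩ := by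
  have := sum_triple i h1 h2 hN (fun j => upwind b c ε N x i j * g j)
    (fun j hj1 hj2 hj3 => by
      show upwind b c ε N x i j * g j = 0
      rw [upwind_entry_zero i j h1 h2 hN hj1 hj2 hj3, zero_mul])
  beta_reduce at this
  simp only [Matrix.mulVec, dotProduct]
  rw [this, upwind_entry_m i h1 h2 hN, upwind_entry_p i h1 h2 hN, upwind_entry_d i h1 h2 hN]

lemma upwind_rowsum_interior (i : Fin (N + 1)) (h1 : 1 ≤ (i : ℕ)) (h2 : (i : ℕ) ≤ N - 1)
    (hN : 2 ≤ N) :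
    ∑ j, upwind b c ε N x i j = c (x (i : ℕ)) := by
  have := sum_triple i h1 h2 hN (fun j => upwind b c ε N x i j)
    (fun j hj1 hj2 hj3 => upwind_entry_zero i j h1 h2 hN hj1 hj2 hj3)
  beta_reduce at this
  rw [this, upwind_entry_m i h1 h2 hN, upwind_entry_p i h1 h2 hN, upwind_entry_d i h1 h2 hN]
  ring
end triple

section maxprin
variable {b c : ℝ → ℝ} {ε : ℝ} {N : ℕ} {x : ℕ → ℝ}

lemma upwind_offdiag_nonpos (hε : 0 < ε)
    (hh : ∀ k, 1 ≤ k → k ≤ N → 0 < hst x k)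
    (hbx : ∀ k, 1 ≤ k → k ≤ N - 1 → 0 ≤ b (x k))
    (i : Fin (N + 1)) (h1 : 1 ≤ (i : ℕ)) (h2 : (i : ℕ) ≤ N - 1) (hN : 2 ≤ N)
    (j : Fin (N + 1)) (hij : j ≠ i) : upwind b c ε N x i j ≤ 0 := by
  have hhi : 0 < hst x (i : ℕ) := hh _ h1 (by omega)
  have hhi1 : 0 < hst x ((i : ℕ) + 1) := hh _ (by omega) (by omega)
  have hbri : 0 < hbr x (i : ℕ) := by
    rw [hbr]; positivity
  have hbi := hbx _ h1 h2
  by_cases hj1 : (j : ℕ) + 1 = (i : ℕ)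
  · have : j = ⟨(i : ℕ) - 1, by omega⟩ := by rw [Fin.ext_iff]; simp; omega
    rw [this, upwind_entry_m i h1 h2 hN]
    have : (0:ℝ) < hst x (i : ℕ) * hbr x (i : ℕ) := by positivity
    exact le_of_lt (div_neg_of_neg_of_pos (by linarith) this)
  · by_cases hj2 : (j : ℕ) = (i : ℕ) + 1
    · have : j = ⟨(i : ℕ) + 1, by omega⟩ := by rw [Fin.ext_iff]; simp; omega
      rw [this, upwind_entry_p i h1 h2 hN]
      have hp : (0:ℝ) < hst x ((i : ℕ) + 1) * hbr x (i : ℕ) := by positivity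
      have t1 : -ε / (hst x ((i : ℕ) + 1) * hbr x (i : ℕ)) ≤ 0 :=
        le_of_lt (div_neg_of_neg_of_pos (by linarith) hp)
      have t2 : 0 ≤ b (x (i : ℕ)) / hst x ((i : ℕ) + 1) := div_nonneg hbi (le_of_lt hhi1)
      linarith
    · rw [upwind_entry_zero i j h1 h2 hN hj1 hj2 hij]

lemma upwind_max_principle (hε : 0 < ε) (hN : 2 ≤ N)
    (hh : ∀ k, 1 ≤ k → k ≤ N → 0 < hst x k)
    (hbx : ∀ k, 1 ≤ k → k ≤ N - 1 → 0 ≤ b (x k))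
    (hcx : ∀ k, 1 ≤ k → k ≤ N - 1 → 0 ≤ c (x k))
    (z : Fin (N + 1) → ℝ) (hz : ∀ i, 0 < (upwind b c ε N x).mulVec z i) :
    ∀ i, 0 ≤ z i := by
  obtain ⟨i0, hi0⟩ := Finite.exists_min z
  suffices h : 0 ≤ z i0 by intro i; exact le_trans h (hi0 i)
  by_contra hneg
  push_neg at hneg
  by_cases hbd : (i0 : ℕ) = 0 ∨ (i0 : ℕ) = N
  · have := upwind_mulVec_bdry (b := b) (c := c) (ε := ε) (x := x) i0 hbd z
    have h2 := hz i0
    rw [this] at h2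
    linarith
  · have h1 : 1 ≤ (i0 : ℕ) := by omega
    have h2 : (i0 : ℕ) ≤ N - 1 := by
      have := i0.isLt; omega
    have key : (upwind b c ε N x).mulVec z i0 ≤ c (x (i0 : ℕ)) * z i0 := by
      have step1 : (upwind b c ε N x).mulVec z i0
          ≤ ∑ j, upwind b c ε N x i0 j * z i0 := by
        simp only [Matrix.mulVec, dotProduct]
        apply Finset.sum_le_sum
        intro j _
        by_cases hji : j = i0
        · rw [hji]
        · exact mul_le_mul_of_nonpos_left (hi0 j)
            (upwind_offdiag_nonpos hε hh hbx i0 h1 h2 hN j hji)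
      calc (upwind b c ε N x).mulVec z i0 ≤ ∑ j, upwind b c ε N x i0 j * z i0 := step1
        _ = (∑ j, upwind b c ε N x i0 j) * z i0 := by rw [Finset.sum_mul]
        _ = c (x (i0 : ℕ)) * z i0 := by rw [upwind_rowsum_interior i0 h1 h2 hN]
    have hc0 := hcx _ h1 h2
    have := hz i0
    nlinarith
end maxprin

section stability
variable {b c : ℝ → ℝ} {ε : ℝ} {N : ℕ} {x : ℕ → ℝ} {β : ℝ}

lemma upwind_mulVec_comparison (hε : 0 < ε)
    (hh : ∀ k, 1 ≤ k → k ≤ N → 0 < hst x k)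
    (i : Fin (N + 1)) (h1 : 1 ≤ (i : ℕ)) (h2 : (i : ℕ) ≤ N - 1) (hN : 2 ≤ N) :
    (upwind b c ε N x).mulVec (fun j => 2 - x (j : ℕ)) i
      = b (x (i : ℕ)) + c (x (i : ℕ)) * (2 - x (i : ℕ)) := by
  have hhi : 0 < hst x (i : ℕ) := hh _ h1 (by omega)
  have hhi1 : 0 < hst x ((i : ℕ) + 1) := hh _ (by omega) (by omega)
  have hbri : 0 < hbr x (i : ℕ) := by rw [hbr]; positivity
  rw [upwind_mulVec_interior i h1 h2 hN]
  have e1 : hst x (i : ℕ) = x (i : ℕ) - x ((i : ℕ) - 1) := rfl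
  have e2 : hst x ((i : ℕ) + 1) = x ((i : ℕ) + 1) - x (i : ℕ) := by
    rw [hst, Nat.add_sub_cancel]
  have hne1 : hst x (i : ℕ) ≠ 0 := ne_of_gt hhi
  have hne2 : hst x ((i : ℕ) + 1) ≠ 0 := ne_of_gt hhi1
  have hne3 : hbr x (i : ℕ) ≠ 0 := ne_of_gt hbri
  have key1 : (2 - x ((i : ℕ) - 1)) = (2 - x (i : ℕ)) + hst x (i : ℕ) := by
    rw [e1]; ring
  have key2 : (2 - x ((i : ℕ) + 1)) = (2 - x (i : ℕ)) - hst x ((i : ℕ) + 1) := by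
    rw [e2]; ring
  rw [key1, key2]
  field_simp
  ring

lemma upwind_mulVec_comp_ge (hε : 0 < ε) (hN : 2 ≤ N) (hβ : 0 < β)
    (hh : ∀ k, 1 ≤ k → k ≤ N → 0 < hst x k)
    (hx : ∀ k, k ≤ N → 0 ≤ x k ∧ x k ≤ 1)
    (hblx : ∀ k, 1 ≤ k → k ≤ N - 1 → β ≤ b (x k))
    (hcx : ∀ k, 1 ≤ k → k ≤ N - 1 → 0 ≤ c (x k)) :
    ∀ i, min 1 β ≤ (upwind b c ε N x).mulVec (fun j => 2 - x (j : ℕ)) i := by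
  intro i
  by_cases hbd : (i : ℕ) = 0 ∨ (i : ℕ) = N
  · rw [upwind_mulVec_bdry i hbd]
    have := (hx (i : ℕ) (by omega)).2
    have hm : min 1 β ≤ 1 := min_le_left _ _
    show min 1 β ≤ 2 - x (i : ℕ)
    linarith
  · have h1 : 1 ≤ (i : ℕ) := by omega
    have h2 : (i : ℕ) ≤ N - 1 := by have := i.isLt; omega
    rw [upwind_mulVec_comparison hε hh i h1 h2 hN]
    have hb' := hblx _ h1 h2
    have hc' := hcx _ h1 h2
    have hx2 := (hx (i : ℕ) (by omega)).2
    have hm : min 1 β ≤ β := min_le_right _ _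
    nlinarith

/-- One-sided stability estimate. -/
lemma upwind_one_side (hε : 0 < ε) (hN : 2 ≤ N) (hβ : 0 < β)
    (hh : ∀ k, 1 ≤ k → k ≤ N → 0 < hst x k)
    (hx : ∀ k, k ≤ N → 0 ≤ x k ∧ x k ≤ 1)
    (hblx : ∀ k, 1 ≤ k → k ≤ N - 1 → β ≤ b (x k))
    (hcx : ∀ k, 1 ≤ k → k ≤ N - 1 → 0 ≤ c (x k))
    (w u : Fin (N + 1) → ℝ) (s : ℝ) (hAw : (upwind b c ε N x).mulVec w = u)
    (hus : ∀ j, |u j| ≤ s) : ∀ i, w i ≤ 2 * s / min 1 β := by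
  set m := min 1 β with hm
  have hm0 : 0 < m := lt_min one_pos hβ
  have hs0 : 0 ≤ s := le_trans (abs_nonneg _) (hus 0)
  have hbx : ∀ k, 1 ≤ k → k ≤ N - 1 → 0 ≤ b (x k) := fun k hk1 hk2 =>
    le_trans (le_of_lt hβ) (hblx k hk1 hk2)
  intro i
  have key : ∀ δ : ℝ, 0 < δ → w i ≤ 2 * s / m + 2 * δ := by
    intro δ hδ
    set v : Fin (N + 1) → ℝ := fun j => 2 - x (j : ℕ) with hv
    set z : Fin (N + 1) → ℝ := (s / m + δ) • v - w with hz
    have hAz : ∀ i', 0 < (upwind b c ε N x).mulVec z i' := by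
      intro i'
      rw [hz, Matrix.mulVec_sub, Matrix.mulVec_smul, hAw]
      have hAv := upwind_mulVec_comp_ge hε hN hβ hh hx hblx hcx i'
      have hco : 0 ≤ s / m + δ := by positivity
      have : (s / m + δ) * m ≤ (s / m + δ) * (upwind b c ε N x).mulVec v i' :=
        mul_le_mul_of_nonneg_left hAv hco
      have hsm : (s / m + δ) * m = s + δ * m := by
        field_simp
      have hu' : u i' ≤ s := le_trans (le_abs_self _) (hus i')
      simp only [Pi.sub_apply, Pi.smul_apply, smul_eq_mul]
      nlinarith
    have hz0 := upwind_max_principle hε hN hh hbx hcx z hAz i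
    rw [hz] at hz0
    simp only [Pi.sub_apply, Pi.smul_apply, smul_eq_mul] at hz0
    have hv2 : v i ≤ 2 := by
      have := (hx (i : ℕ) (by have := i.isLt; omega)).1
      rw [hv]; simp only []; linarith
    have hco : 0 ≤ s / m + δ := by positivity
    have : w i ≤ (s / m + δ) * v i := by linarith
    have h2 : (s / m + δ) * v i ≤ (s / m + δ) * 2 := mul_le_mul_of_nonneg_left hv2 hco
    have h3 : (s / m + δ) * 2 = 2 * s / m + 2 * δ := by ring
    linarith
  by_contra hcon
  push_neg at hcon
  have hδ : 0 < (w i - 2 * s / m) / 4 := by linarith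
  have := key _ hδ
  linarith

/-- Full stability estimate in the max norm. -/
lemma upwind_stability (hε : 0 < ε) (hN : 2 ≤ N) (hβ : 0 < β)
    (hh : ∀ k, 1 ≤ k → k ≤ N → 0 < hst x k)
    (hx : ∀ k, k ≤ N → 0 ≤ x k ∧ x k ≤ 1)
    (hblx : ∀ k, 1 ≤ k → k ≤ N - 1 → β ≤ b (x k))
    (hcx : ∀ k, 1 ≤ k → k ≤ N - 1 → 0 ≤ c (x k))
    (w u : Fin (N + 1) → ℝ) (s : ℝ) (hAw : (upwind b c ε N x).mulVec w = u)
    (hus : ∀ j, |u j| ≤ s) : ∀ i, |w i| ≤ 2 * s / min 1 β := by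
  intro i
  have h1 := upwind_one_side hε hN hβ hh hx hblx hcx w u s hAw hus i
  have h2 := upwind_one_side hε hN hβ hh hx hblx hcx (-w) (-u) s
    (by rw [Matrix.mulVec_neg, hAw]) (fun j => by rw [Pi.neg_apply, abs_neg]; exact hus j) i
  rw [Pi.neg_apply] at h2
  rw [abs_le]
  constructor <;> linarith
end stability

section invnorm
variable {b c : ℝ → ℝ} {ε : ℝ} {N : ℕ} {x : ℕ → ℝ} {β : ℝ}

lemma matNorm_le {n : ℕ} [NeZero n] (A : Matrix (Fin n) (Fin n) ℝ) (K : ℝ)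
    (hK : ∀ i, ∑ j, |A i j| ≤ K) : matNorm A ≤ K := ciSup_le hK

lemma matNorm_nonneg {n : ℕ} [NeZero n] (A : Matrix (Fin n) (Fin n) ℝ) : 0 ≤ matNorm A := by
  have h0 : (0:ℝ) ≤ ∑ j, |A 0 j| := Finset.sum_nonneg fun j _ => abs_nonneg _
  exact le_trans h0 (le_ciSup (f := fun i => ∑ j, |A i j|)
    (Set.Finite.bddAbove (Set.finite_range _)) 0)

lemma upwind_inv_norm (hε : 0 < ε) (hN : 2 ≤ N) (hβ : 0 < β)
    (hh : ∀ k, 1 ≤ k → k ≤ N → 0 < hst x k)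
    (hx : ∀ k, k ≤ N → 0 ≤ x k ∧ x k ≤ 1)
    (hblx : ∀ k, 1 ≤ k → k ≤ N - 1 → β ≤ b (x k))
    (hcx : ∀ k, 1 ≤ k → k ≤ N - 1 → 0 ≤ c (x k)) :
    matNorm (upwind b c ε N x)⁻¹ ≤ 2 / min 1 β := by
  set A := upwind b c ε N x with hA
  have hm0 : 0 < min 1 β := lt_min one_pos hβ
  have hdet : A.det ≠ 0 := by
    intro h0
    obtain ⟨v, hv0, hv⟩ := (Matrix.exists_mulVec_eq_zero_iff).mpr h0
    have hb2 := upwind_stability hε hN hβ hh hx hblx hcx v 0 0 hv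
      (fun j => by simp)
    apply hv0
    funext i
    have h3 := hb2 i
    have h4 : 2 * (0:ℝ) / min 1 β = 0 := by ring
    rw [h4] at h3
    have := abs_nonneg (v i)
    have : |v i| = 0 := le_antisymm h3 this
    simpa using this
  have hunit : IsUnit A.det := isUnit_iff_ne_zero.mpr hdet
  have hAAi : A * A⁻¹ = 1 := Matrix.mul_nonsing_inv A hunit
  apply matNorm_le
  intro i
  set u : Fin (N + 1) → ℝ := fun j => if 0 ≤ A⁻¹ i j then 1 else -1 with hu
  have hub : ∀ j, |u j| ≤ 1 := by
    intro j
    rw [hu]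
    by_cases h : 0 ≤ A⁻¹ i j <;> simp [h]
  have hAw : A.mulVec (A⁻¹.mulVec u) = u := by
    rw [Matrix.mulVec_mulVec, hAAi, Matrix.one_mulVec]
  have hbnd := upwind_stability hε hN hβ hh hx hblx hcx (A⁻¹.mulVec u) u 1 hAw hub i
  have hwi : A⁻¹.mulVec u i = ∑ j, |A⁻¹ i j| := by
    simp only [Matrix.mulVec, dotProduct]
    apply Finset.sum_congr rfl
    intro j _
    rw [hu]
    by_cases h : 0 ≤ A⁻¹ i j
    · simp [h, abs_of_nonneg h]
    · push_neg at h
      simp [not_le.mpr h, abs_of_neg h]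
  calc ∑ j, |A⁻¹ i j| = A⁻¹.mulVec u i := hwi.symm
    _ ≤ |A⁻¹.mulVec u i| := le_abs_self _
    _ ≤ 2 * 1 / min 1 β := hbnd
    _ = 2 / min 1 β := by ring
end invnorm

section normA
variable {b c : ℝ → ℝ} {ε : ℝ} {N : ℕ} {x : ℕ → ℝ}

lemma upwind_row_bound (hε : 0 < ε) (hN : 2 ≤ N) (hL B Cm : ℝ) (hL0 : 0 < hL)
    (hlo : ∀ k, 1 ≤ k → k ≤ N → hL ≤ hst x k)
    (hb0 : ∀ k, 1 ≤ k → k ≤ N - 1 → 0 ≤ b (x k))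
    (hbB : ∀ k, 1 ≤ k → k ≤ N - 1 → b (x k) ≤ B)
    (hc0 : ∀ k, 1 ≤ k → k ≤ N - 1 → 0 ≤ c (x k))
    (hcC : ∀ k, 1 ≤ k → k ≤ N - 1 → c (x k) ≤ Cm) :
    ∀ i, ∑ j, |upwind b c ε N x i j| ≤ max 1 (4 * (ε / (hL * hL)) + 2 * (B / hL) + Cm) := by
  intro i
  by_cases hbd : (i : ℕ) = 0 ∨ (i : ℕ) = N
  · refine le_trans (le_of_eq ?_) (le_max_left _ _)
    simp only [upwind, if_pos hbd]
    simp [apply_ite abs, Finset.sum_ite_eq']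
  · have h1 : 1 ≤ (i : ℕ) := by omega
    have h2 : (i : ℕ) ≤ N - 1 := by have := i.isLt; omega
    refine le_trans ?_ (le_max_right _ _)
    have hhi : 0 < hst x (i : ℕ) := lt_of_lt_of_le hL0 (hlo _ h1 (by omega))
    have hhi1 : 0 < hst x ((i : ℕ) + 1) := lt_of_lt_of_le hL0 (hlo _ (by omega) (by omega))
    have hbri : hL ≤ hbr x (i : ℕ) := by
      rw [hbr]
      have := hlo _ h1 (by omega : (i:ℕ) ≤ N)
      have := hlo _ (by omega : 1 ≤ (i:ℕ)+1) (by omega : (i:ℕ)+1 ≤ N)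
      linarith
    have hbrip : 0 < hbr x (i : ℕ) := lt_of_lt_of_le hL0 hbri
    have hsum := sum_triple i h1 h2 hN (fun j => |upwind b c ε N x i j|)
      (fun j hj1 hj2 hj3 => by
        show |upwind b c ε N x i j| = 0
        rw [upwind_entry_zero i j h1 h2 hN hj1 hj2 hj3, abs_zero])
    beta_reduce at hsum
    rw [hsum, upwind_entry_m i h1 h2 hN, upwind_entry_p i h1 h2 hN, upwind_entry_d i h1 h2 hN]
    have hb' := hb0 _ h1 h2
    have hbB' := hbB _ h1 h2
    have hc' := hc0 _ h1 h2
    have hcC' := hcC _ h1 h2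
    have E1pos : 0 < ε / (hst x (i : ℕ) * hbr x (i : ℕ)) := by positivity
    have E2pos : 0 < ε / (hst x ((i : ℕ) + 1) * hbr x (i : ℕ)) := by positivity
    have Bpos : 0 ≤ b (x (i : ℕ)) / hst x ((i : ℕ) + 1) := div_nonneg hb' (le_of_lt hhi1)
    have eabs1 : |-ε / (hst x (i : ℕ) * hbr x (i : ℕ))|
        = ε / (hst x (i : ℕ) * hbr x (i : ℕ)) := by
      rw [neg_div, abs_neg, abs_of_pos E1pos]
    have eabs2 : |-ε / (hst x ((i : ℕ) + 1) * hbr x (i : ℕ))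
          - b (x (i : ℕ)) / hst x ((i : ℕ) + 1)|
        = ε / (hst x ((i : ℕ) + 1) * hbr x (i : ℕ)) + b (x (i : ℕ)) / hst x ((i : ℕ) + 1) := by
      rw [show -ε / (hst x ((i : ℕ) + 1) * hbr x (i : ℕ)) - b (x (i : ℕ)) / hst x ((i : ℕ) + 1)
          = -(ε / (hst x ((i : ℕ) + 1) * hbr x (i : ℕ)) + b (x (i : ℕ)) / hst x ((i : ℕ) + 1))
          from by ring, abs_neg, abs_of_pos (by linarith)]
    have eabs3 : |ε / (hst x (i : ℕ) * hbr x (i : ℕ))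
          + (ε / (hst x ((i : ℕ) + 1) * hbr x (i : ℕ)) + b (x (i : ℕ)) / hst x ((i : ℕ) + 1))
          + c (x (i : ℕ))|
        = ε / (hst x (i : ℕ) * hbr x (i : ℕ))
          + (ε / (hst x ((i : ℕ) + 1) * hbr x (i : ℕ)) + b (x (i : ℕ)) / hst x ((i : ℕ) + 1))
          + c (x (i : ℕ)) := abs_of_pos (by linarith)
    rw [eabs1, eabs2, eabs3]
    have bnd1 : ε / (hst x (i : ℕ) * hbr x (i : ℕ)) ≤ ε / (hL * hL) := by
      gcongr
      exact hlo _ h1 (by omega)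
    have bnd2 : ε / (hst x ((i : ℕ) + 1) * hbr x (i : ℕ)) ≤ ε / (hL * hL) := by
      gcongr
      exact hlo _ (by omega) (by omega)
    have bnd3 : b (x (i : ℕ)) / hst x ((i : ℕ) + 1) ≤ B / hL := by
      exact div_le_div₀ (le_trans hb' hbB') hbB' hL0 (hlo _ (by omega) (by omega))
    linarith
end normA

set_option maxHeartbeats 1000000 in
/-- Theorem 2: on the VB-mesh, the condition number of the upwind
matrix satisfies `κ(A_N) = ‖A_N⁻¹‖ ‖A_N‖ ≤ C N²/ε` with `C` independent of `ε`
and `N`. -/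
theorem stmt_10 (q a β : ℝ) (hq0 : 0 < q) (hq1 : q < 1) (ha : 0 < a) (hβ : 0 < β)
    (b c : ℝ → ℝ) (hb : ContinuousOn b (Set.Icc 0 1)) (hc : ContinuousOn c (Set.Icc 0 1))
    (hbl : ∀ t ∈ Set.Icc (0 : ℝ) 1, β ≤ b t)
    (hcl : ∀ t ∈ Set.Icc (0 : ℝ) 1, 0 ≤ c t) :
    ∃ C : ℝ, 0 < C ∧
      ∀ (ε : ℝ) (N : ℕ), 0 < ε → a * ε < q → 2 ≤ N →
        matNorm (upwind b c ε N (meshx a ε q N))⁻¹ *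
            matNorm (upwind b c ε N (meshx a ε q N)) ≤ C * (N : ℝ) ^ 2 / ε := by
  obtain ⟨xB, hxB, hxBmax'⟩ := isCompact_Icc.exists_isMaxOn
    (Set.nonempty_Icc.mpr (by norm_num : (0:ℝ) ≤ 1)) hb
  obtain ⟨xC, hxC, hxCmax'⟩ := isCompact_Icc.exists_isMaxOn
    (Set.nonempty_Icc.mpr (by norm_num : (0:ℝ) ≤ 1)) hc
  have hxBmax : ∀ y ∈ Set.Icc (0:ℝ) 1, b y ≤ b xB := isMaxOn_iff.mp hxBmax'
  have hxCmax : ∀ y ∈ Set.Icc (0:ℝ) 1, c y ≤ c xC := isMaxOn_iff.mp hxCmax'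
  set B := b xB with hBdef
  set Cm := c xC with hCmdef
  have hB : β ≤ B := hbl xB hxB
  have hB0 : 0 ≤ B := le_trans (le_of_lt hβ) hB
  have hCm : 0 ≤ Cm := hcl xC hxC
  set C1 : ℝ := 4 * q ^ 2 / a ^ 2 + B * q / a + (Cm + 1) * (q / (4 * a)) with hC1
  have hC1pos : 0 < C1 := by
    have h1 : 0 < 4 * q ^ 2 / a ^ 2 := div_pos (by nlinarith) (by positivity)
    have h2 : 0 ≤ B * q / a := div_nonneg (mul_nonneg hB0 (le_of_lt hq0)) (le_of_lt ha)
    have h3 : 0 ≤ (Cm + 1) * (q / (4 * a)) :=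
      mul_nonneg (by linarith) (div_nonneg (le_of_lt hq0) (by linarith))
    rw [hC1]; linarith
  have hm0 : 0 < min 1 β := lt_min one_pos hβ
  refine ⟨(2 / min 1 β) * C1, mul_pos (div_pos two_pos hm0) hC1pos, ?_⟩
  intro ε N hε haq hN
  set x := meshx a ε q N with hxdef
  have hNr : (0:ℝ) < N := by
    have : 0 < N := by omega
    exact_mod_cast this
  have hN2 : (2:ℝ) ≤ N := by exact_mod_cast hN
  have hx : ∀ k, k ≤ N → 0 ≤ x k ∧ x k ≤ 1 := by
    intro k hk
    have h0 : (0:ℝ) ≤ (k:ℝ) / N := by positivity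
    have h1 : (k:ℝ) / N ≤ 1 := by
      rw [div_le_one hNr]; exact_mod_cast hk
    exact lam_mem hq0 hq1 hε ha haq h0 h1
  set hL : ℝ := a * ε / (q * N) with hhL
  have hL0 : 0 < hL := div_pos (by positivity) (mul_pos hq0 hNr)
  have hlo : ∀ k, 1 ≤ k → k ≤ N → hL ≤ hst x k := by
    intro k hk1 hk2
    have hc1 : ((k - 1 : ℕ) : ℝ) = (k : ℝ) - 1 := by
      push_cast [Nat.cast_sub hk1]; ring
    have ht0 : (0:ℝ) ≤ ((k - 1 : ℕ) : ℝ) / N := by positivity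
    have ht12 : ((k - 1 : ℕ) : ℝ) / N ≤ (k : ℝ) / N :=
      (div_le_div_iff_of_pos_right hNr).mpr (by rw [hc1]; linarith)
    have hd := lam_diff hq0 hq1 hε ha haq ht0 ht12
    have hval : a * ε / q * ((k : ℝ) / N - ((k - 1 : ℕ) : ℝ) / N) = hL := by
      rw [hc1, hhL]
      field_simp
      ring
    have hstx : hst x k = lam a ε q ((k:ℝ)/N) - lam a ε q (((k-1:ℕ):ℝ)/N) := rfl
    rw [hstx, ← hval]
    exact hd
  have hh : ∀ k, 1 ≤ k → k ≤ N → 0 < hst x k := fun k h1 h2 =>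
    lt_of_lt_of_le hL0 (hlo k h1 h2)
  have hmem : ∀ k, k ≤ N → x k ∈ Set.Icc (0:ℝ) 1 := fun k hk =>
    Set.mem_Icc.mpr ⟨(hx k hk).1, (hx k hk).2⟩
  have hblx : ∀ k, 1 ≤ k → k ≤ N - 1 → β ≤ b (x k) := fun k h1 h2 =>
    hbl (x k) (hmem k (by omega))
  have hb0 : ∀ k, 1 ≤ k → k ≤ N - 1 → 0 ≤ b (x k) := fun k h1 h2 =>
    le_trans (le_of_lt hβ) (hblx k h1 h2)
  have hcx : ∀ k, 1 ≤ k → k ≤ N - 1 → 0 ≤ c (x k) := fun k h1 h2 =>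
    hcl (x k) (hmem k (by omega))
  have hbB : ∀ k, 1 ≤ k → k ≤ N - 1 → b (x k) ≤ B := fun k h1 h2 =>
    hxBmax (x k) (hmem k (by omega))
  have hcC : ∀ k, 1 ≤ k → k ≤ N - 1 → c (x k) ≤ Cm := fun k h1 h2 =>
    hxCmax (x k) (hmem k (by omega))
  have hnormInv := upwind_inv_norm hε hN hβ hh hx hblx hcx
  have hnormA : matNorm (upwind b c ε N x)
      ≤ max 1 (4 * (ε / (hL * hL)) + 2 * (B / hL) + Cm) :=
    matNorm_le _ _ (upwind_row_bound hε hN hL B Cm hL0 hlo hb0 hbB hcx hcC)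
  have hNne : (N:ℝ) ≠ 0 := ne_of_gt hNr
  have i1 : 4 * (ε / (hL * hL)) = (4 * q ^ 2 / a ^ 2) * ((N:ℝ) ^ 2 / ε) := by
    rw [hhL]; field_simp
  have i2 : 2 * (B / hL) = (B * q / a) * (2 * (N:ℝ) / ε) := by
    rw [hhL]; field_simp
  have i3 : (B * q / a) * (2 * (N:ℝ) / ε) ≤ (B * q / a) * ((N:ℝ) ^ 2 / ε) := by
    apply mul_le_mul_of_nonneg_left ?_ (div_nonneg (mul_nonneg hB0 (le_of_lt hq0)) (le_of_lt ha))
    exact (div_le_div_iff_of_pos_right hε).mpr (by nlinarith)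
  have h14 : 1 ≤ (q / (4 * a)) * ((N:ℝ) ^ 2 / ε) := by
    rw [show (q / (4 * a)) * ((N:ℝ) ^ 2 / ε) = q * (N:ℝ) ^ 2 / (4 * a * ε) by ring]
    rw [le_div_iff₀ (by positivity)]
    have hN4 : (4:ℝ) ≤ (N:ℝ) ^ 2 := by nlinarith
    have := mul_le_mul_of_nonneg_left hN4 (le_of_lt hq0)
    linarith
  have i4 : Cm ≤ ((Cm + 1) * (q / (4 * a))) * ((N:ℝ) ^ 2 / ε) := by
    calc Cm ≤ Cm + 1 := by linarith
      _ = (Cm + 1) * 1 := by ring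
      _ ≤ (Cm + 1) * ((q / (4 * a)) * ((N:ℝ) ^ 2 / ε)) :=
        mul_le_mul_of_nonneg_left h14 (by linarith)
      _ = ((Cm + 1) * (q / (4 * a))) * ((N:ℝ) ^ 2 / ε) := by ring
  have eC : C1 * (N:ℝ) ^ 2 / ε = (4 * q ^ 2 / a ^ 2) * ((N:ℝ) ^ 2 / ε)
      + (B * q / a) * ((N:ℝ) ^ 2 / ε) + ((Cm + 1) * (q / (4 * a))) * ((N:ℝ) ^ 2 / ε) := by
    rw [hC1]; ring
  have hnn1 : 0 ≤ (4 * q ^ 2 / a ^ 2) * ((N:ℝ) ^ 2 / ε) := by positivity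
  have hnn2 : 0 ≤ (B * q / a) * ((N:ℝ) ^ 2 / ε) :=
    mul_nonneg (div_nonneg (mul_nonneg hB0 (le_of_lt hq0)) (le_of_lt ha)) (by positivity)
  have key : max 1 (4 * (ε / (hL * hL)) + 2 * (B / hL) + Cm) ≤ C1 * (N:ℝ) ^ 2 / ε := by
    apply max_le
    · have h15 : (1:ℝ) ≤ ((Cm + 1) * (q / (4 * a))) * ((N:ℝ) ^ 2 / ε) := by
        calc (1:ℝ) = 1 * 1 := by ring
          _ ≤ (Cm + 1) * ((q / (4 * a)) * ((N:ℝ) ^ 2 / ε)) :=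
            mul_le_mul (by linarith) h14 (by norm_num) (by linarith)
          _ = ((Cm + 1) * (q / (4 * a))) * ((N:ℝ) ^ 2 / ε) := by ring
      rw [eC]; linarith
    · rw [eC]; linarith [i1, i2, i3, i4]
  calc matNorm (upwind b c ε N x)⁻¹ * matNorm (upwind b c ε N x)
      ≤ (2 / min 1 β) * (C1 * (N:ℝ) ^ 2 / ε) :=
        mul_le_mul hnormInv (le_trans hnormA key) (matNorm_nonneg _)
          (le_of_lt (div_pos two_pos hm0))
    _ = (2 / min 1 β * C1) * (N:ℝ) ^ 2 / ε := by ring
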